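/- Let P ∈ ℝ^{n×n} be symmetric positive semidefinite solving A P + P Aᵀ + H (P ⊗ P) Hᵀ + ∑_{k=1}^m N_k P N_kᵀ + B Bᵀ = 0. Then for any v ∈ ker P: Bᵀ v = 0, P N_kᵀ v = 0 for all k, (P ⊗ P) Hᵀ v = 0, and P Aᵀ v = 0. -/

import Mathlib

open Matrix Kronecker

lemma kron_psd {n : ℕ} {P : Matrix (Fin n) (Fin n) ℝ} (hP : P.PosSemidef) :
    (P ⊗ₖ P).PosSemidef := by
  exact hP.kronecker hP

lemma sum_mulVec' {ι κ τ : Type*} [Fintype ι] [Fintype κ] [Fintype τ]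
    (M : τ → Matrix ι κ ℝ) (v : κ → ℝ) :
    (∑ k, M k) *ᵥ v = ∑ k, (M k) *ᵥ v := by
  ext i
  simp [Matrix.mulVec, dotProduct, Finset.sum_mul, Finset.sum_apply, Matrix.sum_apply]
  rw [Finset.sum_comm]

lemma dotProduct_sum' {ι τ : Type*} [Fintype ι] [Fintype τ]
    (v : ι → ℝ) (w : τ → ι → ℝ) : v ⬝ᵥ (∑ k, w k) = ∑ k, v ⬝ᵥ w k := by
  simp [dotProduct, Finset.mul_sum, Finset.sum_apply]
  rw [Finset.sum_comm]

lemma quad_eq {ι κ : Type*} [Fintype ι] [Fintype κ] (M : Matrix ι κ ℝ)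
    (Q : Matrix κ κ ℝ) (v : ι → ℝ) :
    v ⬝ᵥ (M * Q * Mᵀ) *ᵥ v = (Mᵀ *ᵥ v) ⬝ᵥ Q *ᵥ (Mᵀ *ᵥ v) := by
  rw [← Matrix.mulVec_mulVec, ← Matrix.mulVec_mulVec, Matrix.dotProduct_mulVec,
    Matrix.mulVec_transpose]

theorem stmt8 {n m : ℕ} (A : Matrix (Fin n) (Fin n) ℝ)
    (H : Matrix (Fin n) (Fin n × Fin n) ℝ)
    (N : Fin m → Matrix (Fin n) (Fin n) ℝ)
    (B : Matrix (Fin n) (Fin m) ℝ)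
    (P : Matrix (Fin n) (Fin n) ℝ) (hP : P.PosSemidef)
    (heq : A * P + P * Aᵀ + H * (P ⊗ₖ P) * Hᵀ + ∑ k, N k * P * (N k)ᵀ + B * Bᵀ = 0)
    (v : Fin n → ℝ) (hv : P.mulVec v = 0) :
    Bᵀ.mulVec v = 0 ∧
    (∀ k, (P * (N k)ᵀ).mulVec v = 0) ∧
    ((P ⊗ₖ P) * Hᵀ).mulVec v = 0 ∧
    (P * Aᵀ).mulVec v = 0 := by
  have hPT : Pᵀ = P := by have := hP.1.eq; rwa [Matrix.conjTranspose_eq_transpose_of_trivial] at this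
  have h0 : v ⬝ᵥ (A * P + P * Aᵀ + H * (P ⊗ₖ P) * Hᵀ + ∑ k, N k * P * (N k)ᵀ + B * Bᵀ) *ᵥ v = 0 := by
    rw [heq]; simp
  have t1 : v ⬝ᵥ (A * P) *ᵥ v = 0 := by
    rw [← Matrix.mulVec_mulVec, hv, Matrix.mulVec_zero, dotProduct_zero]
  have t2 : v ⬝ᵥ (P * Aᵀ) *ᵥ v = 0 := by
    rw [← Matrix.mulVec_mulVec, Matrix.dotProduct_mulVec, ← Matrix.mulVec_transpose, hPT, hv]
    simp
  have t3 : v ⬝ᵥ (H * (P ⊗ₖ P) * Hᵀ) *ᵥ v = (Hᵀ *ᵥ v) ⬝ᵥ (P ⊗ₖ P) *ᵥ (Hᵀ *ᵥ v) := quad_eq _ _ _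
  have t4 : ∀ k, v ⬝ᵥ (N k * P * (N k)ᵀ) *ᵥ v = ((N k)ᵀ *ᵥ v) ⬝ᵥ P *ᵥ ((N k)ᵀ *ᵥ v) :=
    fun k => quad_eq _ _ _
  have t5 : v ⬝ᵥ (B * Bᵀ) *ᵥ v = (Bᵀ *ᵥ v) ⬝ᵥ (Bᵀ *ᵥ v) := by
    rw [← Matrix.mulVec_mulVec, Matrix.dotProduct_mulVec, Matrix.mulVec_transpose]
  have hPP := kron_psd hP
  have hq3 : (0:ℝ) ≤ (Hᵀ *ᵥ v) ⬝ᵥ (P ⊗ₖ P) *ᵥ (Hᵀ *ᵥ v) := by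
    simpa using (posSemidef_iff_dotProduct_mulVec.mp hPP).2 (Hᵀ *ᵥ v)
  have hq4 : ∀ k, (0:ℝ) ≤ ((N k)ᵀ *ᵥ v) ⬝ᵥ P *ᵥ ((N k)ᵀ *ᵥ v) := fun k => by
    simpa using (posSemidef_iff_dotProduct_mulVec.mp hP).2 ((N k)ᵀ *ᵥ v)
  have hq5 : (0:ℝ) ≤ (Bᵀ *ᵥ v) ⬝ᵥ (Bᵀ *ᵥ v) := Finset.sum_nonneg fun i _ => mul_self_nonneg _
  have hsum4 : (0:ℝ) ≤ ∑ k, ((N k)ᵀ *ᵥ v) ⬝ᵥ P *ᵥ ((N k)ᵀ *ᵥ v) :=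
    Finset.sum_nonneg fun k _ => hq4 k
  have hexp : v ⬝ᵥ (A * P + P * Aᵀ + H * (P ⊗ₖ P) * Hᵀ + ∑ k, N k * P * (N k)ᵀ + B * Bᵀ) *ᵥ v
      = v ⬝ᵥ (A * P) *ᵥ v + v ⬝ᵥ (P * Aᵀ) *ᵥ v + v ⬝ᵥ (H * (P ⊗ₖ P) * Hᵀ) *ᵥ v
        + ∑ k, v ⬝ᵥ (N k * P * (N k)ᵀ) *ᵥ v + v ⬝ᵥ (B * Bᵀ) *ᵥ v := by
    simp [Matrix.add_mulVec, dotProduct_add, sum_mulVec', dotProduct_sum']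
  rw [hexp, t1, t2, t3, t5, Finset.sum_congr rfl fun k _ => t4 k] at h0
  have h3z : (Hᵀ *ᵥ v) ⬝ᵥ (P ⊗ₖ P) *ᵥ (Hᵀ *ᵥ v) = 0 := by linarith
  have h4z : ∀ k, ((N k)ᵀ *ᵥ v) ⬝ᵥ P *ᵥ ((N k)ᵀ *ᵥ v) = 0 := by
    have hs : ∑ k, ((N k)ᵀ *ᵥ v) ⬝ᵥ P *ᵥ ((N k)ᵀ *ᵥ v) = 0 := by linarith
    intro k
    exact (Finset.sum_eq_zero_iff_of_nonneg fun k _ => hq4 k).mp hs k (Finset.mem_univ k)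
  have h5z : (Bᵀ *ᵥ v) ⬝ᵥ (Bᵀ *ᵥ v) = 0 := by linarith
  have hB : Bᵀ *ᵥ v = 0 := by
    have := dotProduct_self_eq_zero.mp h5z
    exact this
  have hN : ∀ k, (P * (N k)ᵀ) *ᵥ v = 0 := fun k => by
    rw [← Matrix.mulVec_mulVec]
    exact (hP.dotProduct_mulVec_zero_iff _).mp (by simpa using h4z k)
  have hH : ((P ⊗ₖ P) * Hᵀ) *ᵥ v = 0 := by
    rw [← Matrix.mulVec_mulVec]
    exact (hPP.dotProduct_mulVec_zero_iff _).mp (by simpa using h3z)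
  refine ⟨hB, hN, hH, ?_⟩
  have happ := congrArg (fun M => M *ᵥ v) heq
  simp only [Matrix.add_mulVec, Matrix.zero_mulVec, sum_mulVec'] at happ
  have e1 : (A * P) *ᵥ v = 0 := by rw [← Matrix.mulVec_mulVec, hv, Matrix.mulVec_zero]
  have e3 : (H * (P ⊗ₖ P) * Hᵀ) *ᵥ v = 0 := by
    rw [Matrix.mul_assoc, ← Matrix.mulVec_mulVec, hH, Matrix.mulVec_zero]
  have e4 : ∀ k, (N k * P * (N k)ᵀ) *ᵥ v = 0 := fun k => by
    rw [Matrix.mul_assoc, ← Matrix.mulVec_mulVec, hN k, Matrix.mulVec_zero]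
  have e5 : (B * Bᵀ) *ᵥ v = 0 := by
    rw [← Matrix.mulVec_mulVec, hB, Matrix.mulVec_zero]
  simp only [e1, e3, e5, e4, Finset.sum_const_zero] at happ
  simpa using happ
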